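/- With λ = [i;l₁) ⊕ [i;l₂), l₁ ≥ l₂, l₁ ≡ l₂ mod n, and μ_j = [i;l₁ - jn) ⊕ [i;l₂ + jn) for 0 ≤ j ≤ ⌊s/2⌋ where s = (l₁-l₂)/n: ε(μ_{j+1}) = ε(μ_j) + 2 for each j with j + 1 ≤ ⌊s/2⌋ (each step in the chain has codimension 2). -/
import Mathlib


/-- `ε` of the two-row multisegment `[i₁;l₁) ⊕ [i₂;l₂)` (with `l₁ ≥ l₂`),
given by the formula
`ε = ⌈l₁/n⌉ + ⌈l₂/n⌉ + ⌈(l₂ - {i₁-i₂+l₁-1})/n⌉ + ⌈(l₂ - {i₁-i₂})/n⌉`,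
where `{m} ∈ {0,…,n-1}` represents `m` mod `n`. -/
def epsTwo (n : ℕ) [NeZero n] (i₁ i₂ : ZMod n) (l₁ l₂ : ℕ) : ℤ :=
  ⌈(l₁ : ℚ) / n⌉ + ⌈(l₂ : ℚ) / n⌉
    + ⌈((l₂ : ℚ) - ((i₁ - i₂ + (l₁ : ZMod n) - 1).val : ℚ)) / n⌉
    + ⌈((l₂ : ℚ) - ((i₁ - i₂).val : ℚ)) / n⌉

lemma ceil_add_nat_div (x : ℚ) (n : ℕ) (hn : 0 < n) :
    ⌈(x + n) / n⌉ = ⌈x / n⌉ + 1 := by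
  have hn' : (n : ℚ) ≠ 0 := by positivity
  rw [add_div, div_self hn', Int.ceil_add_one]

lemma ceil_sub_nat_div (x : ℚ) (n : ℕ) (hn : 0 < n) :
    ⌈(x - n) / n⌉ = ⌈x / n⌉ - 1 := by
  have := ceil_add_nat_div (x - n) n hn
  simp at this
  omega

/-- in Case 1 (`λ = [i;l₁) ⊕ [i;l₂)`, `l₁ ≥ l₂`,
`l₁ ≡ l₂ mod n`), with `μ_j = [i;l₁ - jn) ⊕ [i;l₂ + jn)` for
`0 ≤ j ≤ ⌊s/2⌋`, `s = (l₁-l₂)/n`, each link of the chain has codimension 2: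
`ε(μ_{j+1}) = ε(μ_j) + 2`. -/
theorem stmt_10 (n : ℕ) [NeZero n] (i : ZMod n) (l₁ l₂ : ℕ) (hl : l₂ ≤ l₁)
    (hmod : l₁ % n = l₂ % n) (s : ℕ) (hs : s = (l₁ - l₂) / n)
    (j : ℕ) (hj : j + 1 ≤ s / 2) :
    epsTwo n i i (l₁ - (j + 1) * n) (l₂ + (j + 1) * n)
      = epsTwo n i i (l₁ - j * n) (l₂ + j * n) + 2 := by
  have hn : (0:ℕ) < n := Nat.pos_of_ne_zero (NeZero.ne n)
  have hdvd : n ∣ l₁ - l₂ := (Nat.modEq_iff_dvd' hl).mp hmod.symm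
  have hsn : s * n = l₁ - l₂ := hs ▸ Nat.div_mul_cancel hdvd
  have h2 : (j+1)*2 ≤ s := (Nat.le_div_iff_mul_le (by norm_num)).mp hj
  have hkey : l₂ + (j+1)*n + (j+1)*n ≤ l₁ := by
    have h3 : (j+1)*2*n ≤ s*n := Nat.mul_le_mul_right _ h2
    have h4 : (j+1)*n + (j+1)*n = (j+1)*2*n := by ring
    omega
  have h1 : (j+1)*n ≤ l₁ := by omega
  have h0 : j*n ≤ l₁ := by
    have : j*n ≤ (j+1)*n := Nat.mul_le_mul_right _ (by omega)
    omega
  have hz : ((l₁ - (j+1)*n : ℕ) : ZMod n) = ((l₁ - j*n : ℕ) : ZMod n) := by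
    rw [Nat.cast_sub h1, Nat.cast_sub h0]
    push_cast
    simp [ZMod.natCast_self]
  have hcast1 : ((l₁ - (j+1)*n : ℕ) : ℚ) = ((l₁ - j*n : ℕ) : ℚ) - n := by
    rw [Nat.cast_sub h1, Nat.cast_sub h0]
    push_cast; ring
  have hcast2 : ((l₂ + (j+1)*n : ℕ) : ℚ) = ((l₂ + j*n : ℕ) : ℚ) + n := by
    push_cast; ring
  unfold epsTwo
  rw [hz, hcast1, hcast2, ceil_sub_nat_div _ n hn, ceil_add_nat_div _ n hn,
    add_sub_right_comm, ceil_add_nat_div _ n hn,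
    add_sub_right_comm ((l₂ + j*n : ℕ) : ℚ) (n:ℚ) (((i - i).val : ℚ)),
    ceil_add_nat_div _ n hn]
  ring
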